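/- Let Y = ∑_{u} w'_u Z_u be a weighted sum of independent 0/1 random variables Z_u with all weights w'_u ∈ [0, 1/(4e·log₂ n)] and E[Y] ≤ 1/(2e). Then P(Y ≥ 1) ≤ 2^{−2 log₂ n} = 1/n². -/

import Mathlib

open MeasureTheory ProbabilityTheory

theorem stmt18 {Ω ι : Type*} [MeasurableSpace Ω] (μ : Measure Ω) [IsProbabilityMeasure μ]
    [Fintype ι] (n : ℕ) (hn : 2 ≤ n) (Z : ι → Ω → ℝ) (w : ι → ℝ)
    (hZ01 : ∀ u ω, Z u ω = 0 ∨ Z u ω = 1) (hZmeas : ∀ u, Measurable (Z u))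
    (hind : iIndepFun Z μ)
    (hw : ∀ u, w u ∈ Set.Icc (0 : ℝ) (1 / (4 * Real.exp 1 * Real.logb 2 n)))
    (hE : ∫ ω, ∑ u, w u * Z u ω ∂μ ≤ 1 / (2 * Real.exp 1)) :
    μ {ω | 1 ≤ ∑ u, w u * Z u ω} ≤ ENNReal.ofReal (1 / (n : ℝ) ^ 2) := by
  classical
  set e := Real.exp 1 with he
  have hepos : 0 < e := Real.exp_pos 1
  have he1 : 1 < e := by
    have := Real.add_one_le_exp 1
    linarith
  set L := Real.logb 2 n with hL
  have hL1 : 1 ≤ L := by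
    rw [hL, Real.le_logb_iff_rpow_le (by norm_num) (by positivity)]
    simpa using (show (2:ℝ) ≤ n by exact_mod_cast hn)
  have hLpos : 0 < L := lt_of_lt_of_le one_pos hL1
  set t := 4 * e * L with ht
  have htpos : 0 < t := by positivity
  set X := fun u : ι => fun ω => w u * Z u ω with hX
  have hXmeas : ∀ u, Measurable (X u) := fun u => (hZmeas u).const_mul (w u)
  have hXind : iIndepFun X μ := by
    have := hind.comp (fun u (x : ℝ) => w u * x) (fun u => measurable_const_mul (w u))
    exact this
  -- bounds on Z
  have hZ0 : ∀ u ω, 0 ≤ Z u ω := fun u ω => by rcases hZ01 u ω with h | h <;> simp [h]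
  have hZ1 : ∀ u ω, Z u ω ≤ 1 := fun u ω => by rcases hZ01 u ω with h | h <;> simp [h]
  have hw0 : ∀ u, 0 ≤ w u := fun u => (hw u).1
  -- t * w u ≤ 1
  have htw : ∀ u, t * w u ≤ 1 := by
    intro u
    have h := (hw u).2
    have : t * w u ≤ t * (1 / (4 * e * L)) := by
      apply mul_le_mul_of_nonneg_left h htpos.le
    calc t * w u ≤ t * (1 / (4 * e * L)) := this
      _ = 1 := by field_simp [ht]; exact ht
  have htw0 : ∀ u, 0 ≤ t * w u := fun u => mul_nonneg htpos.le (hw0 u)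
  -- integrability of Z
  have hZint : ∀ u, Integrable (Z u) μ :=
    fun u => Integrable.mono' (integrable_const 1) (hZmeas u).aestronglyMeasurable
      (Filter.Eventually.of_forall fun ω => by
        rw [Real.norm_eq_abs, abs_of_nonneg (hZ0 u ω)]; exact hZ1 u ω)
  -- integrability of exp (t * X u)
  have hexp_int : ∀ u, Integrable (fun ω => Real.exp (t * X u ω)) μ := by
    intro u
    refine Integrable.mono' (integrable_const (Real.exp (t * w u)))
      (((hXmeas u).const_mul t).exp.aestronglyMeasurable)
      (Filter.Eventually.of_forall fun ω => ?_)
    rw [Real.norm_eq_abs, abs_of_nonneg (Real.exp_pos _).le, Real.exp_le_exp]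
    have : t * w u * Z u ω ≤ t * w u * 1 :=
      mul_le_mul_of_nonneg_left (hZ1 u ω) (htw0 u)
    simpa [hX, mul_assoc] using this
  -- key per-factor pointwise identity: exp (t * X u ω) = 1 + (exp (t * w u) - 1) * Z u ω
  have hptwise : ∀ u ω, Real.exp (t * X u ω)
      = 1 + (Real.exp (t * w u) - 1) * Z u ω := by
    intro u ω
    rcases hZ01 u ω with h | h <;> simp [hX, h, mul_assoc]
  -- mgf of each factor
  have hmgf : ∀ u, mgf (X u) μ t = 1 + (Real.exp (t * w u) - 1) * ∫ ω, Z u ω ∂μ := by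
    intro u
    rw [mgf]
    simp_rw [hptwise]
    rw [integral_add (integrable_const 1) ((hZint u).const_mul _),
      integral_const_mul, integral_const]
    simp
  -- exp(x) - 1 ≤ (e - 1) * x for x ∈ [0,1] (convexity)
  have hconv : ∀ x : ℝ, 0 ≤ x → x ≤ 1 → Real.exp x ≤ 1 + (e - 1) * x := by
    intro x hx0 hx1
    have h := (convexOn_exp).2 (Set.mem_univ (0:ℝ)) (Set.mem_univ (1:ℝ))
      (by linarith : (0:ℝ) ≤ 1 - x) hx0 (by ring)
    simp only [smul_eq_mul, mul_zero, mul_one, zero_add, Real.exp_zero] at h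
    rw [← he] at h
    nlinarith [h]
  -- nonnegativity of E[Z u]
  have hEZ0 : ∀ u, 0 ≤ ∫ ω, Z u ω ∂μ := fun u =>
    integral_nonneg fun ω => hZ0 u ω
  -- factor bound
  have hfac : ∀ u, mgf (X u) μ t ≤ Real.exp ((e - 1) * (t * (w u * ∫ ω, Z u ω ∂μ))) := by
    intro u
    rw [hmgf u]
    have h1 : Real.exp (t * w u) - 1 ≤ (e - 1) * (t * w u) := by
      have := hconv (t * w u) (htw0 u) (htw u)
      linarith
    have h2 : (Real.exp (t * w u) - 1) * ∫ ω, Z u ω ∂μ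
        ≤ (e - 1) * (t * (w u * ∫ ω, Z u ω ∂μ)) := by
      calc (Real.exp (t * w u) - 1) * ∫ ω, Z u ω ∂μ
          ≤ (e - 1) * (t * w u) * ∫ ω, Z u ω ∂μ :=
            mul_le_mul_of_nonneg_right h1 (hEZ0 u)
        _ = (e - 1) * (t * (w u * ∫ ω, Z u ω ∂μ)) := by ring
    calc 1 + (Real.exp (t * w u) - 1) * ∫ ω, Z u ω ∂μ
        ≤ 1 + (e - 1) * (t * (w u * ∫ ω, Z u ω ∂μ)) := by linarith
      _ ≤ Real.exp ((e - 1) * (t * (w u * ∫ ω, Z u ω ∂μ))) :=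
          Real.add_one_le_exp _ |>.trans_eq' (by ring_nf)
  -- sum of expectations
  have hsumE : ∑ u, w u * ∫ ω, Z u ω ∂μ ≤ 1 / (2 * e) := by
    have : ∑ u, w u * ∫ ω, Z u ω ∂μ = ∫ ω, ∑ u, w u * Z u ω ∂μ := by
      rw [integral_finset_sum _ (fun u _ => (hZint u).const_mul (w u))]
      simp_rw [integral_const_mul]
    rw [this]; exact hE
  have hsumE0 : ∀ u, 0 ≤ w u * ∫ ω, Z u ω ∂μ := fun u =>
    mul_nonneg (hw0 u) (hEZ0 u)
  -- mgf of sum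
  have hmgfsum : mgf (∑ u, X u) μ t ≤ Real.exp ((e - 1) * t * (1 / (2 * e))) := by
    rw [hXind.mgf_sum hXmeas]
    calc ∏ u, mgf (X u) μ t
        ≤ ∏ u, Real.exp ((e - 1) * (t * (w u * ∫ ω, Z u ω ∂μ))) := by
          apply Finset.prod_le_prod
          · intro u _; exact mgf_nonneg
          · intro u _; exact hfac u
      _ = Real.exp (∑ u, (e - 1) * (t * (w u * ∫ ω, Z u ω ∂μ))) := by
          rw [Real.exp_sum]
      _ ≤ Real.exp ((e - 1) * t * (1 / (2 * e))) := by
          rw [Real.exp_le_exp]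
          have : ∑ u, (e - 1) * (t * (w u * ∫ ω, Z u ω ∂μ))
              = (e - 1) * t * ∑ u, w u * ∫ ω, Z u ω ∂μ := by
            rw [Finset.mul_sum]; congr 1; ext u; ring
          rw [this]
          apply mul_le_mul_of_nonneg_left hsumE
          have : 0 ≤ e - 1 := by linarith
          positivity
  -- Chernoff bound
  have hint_sum : Integrable (fun ω => Real.exp (t * (∑ u, X u) ω)) μ :=
    hXind.integrable_exp_mul_sum hXmeas (fun u _ => hexp_int u)
  have hcher := measure_ge_le_exp_mul_mgf (μ := μ) (X := ∑ u, X u) 1 htpos.le hint_sum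
  -- rewrite the set
  have hset : {ω | 1 ≤ ∑ u, w u * Z u ω} = {ω | 1 ≤ (∑ u, X u) ω} := by
    ext ω; simp [hX]
  rw [hset]
  rw [ENNReal.le_ofReal_iff_toReal_le (measure_ne_top μ _) (by positivity)]
  refine hcher.trans ?_
  have h2 : Real.exp (-t * 1) * mgf (∑ u, X u) μ t
      ≤ Real.exp (-t * 1) * Real.exp ((e - 1) * t * (1 / (2 * e))) :=
    mul_le_mul_of_nonneg_left hmgfsum (Real.exp_pos _).le
  refine h2.trans ?_
  rw [← Real.exp_add]
  -- exponent: -t + (e-1)t/(2e) = -4eL + 2L(e-1) = -L(2e+2)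
  have hexp_eq : -t * 1 + (e - 1) * t * (1 / (2 * e)) = -L * (2 * e + 2) := by
    rw [ht]; field_simp; ring
  rw [hexp_eq]
  -- 1/n^2 = exp (-2 * Real.log n), and L * ln 2 = ln n
  have hn1 : (1:ℝ) < n := by exact_mod_cast lt_of_lt_of_le one_lt_two hn
  have hnpos : (0:ℝ) < n := by linarith
  have hlogn : L * Real.log 2 = Real.log n := by
    rw [hL, Real.logb]
    field_simp
  have hrhs : (1 / (n : ℝ) ^ 2) = Real.exp (-(2 * Real.log n)) := by
    rw [Real.exp_neg, one_div]
    congr 1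
    rw [show (2:ℝ) * Real.log n = Real.log ((n:ℝ)^2) by
        rw [Real.log_pow]; push_cast; ring,
      Real.exp_log (by positivity)]
  rw [hrhs, Real.exp_le_exp]
  rw [← hlogn]
  have hlog2 : Real.log 2 < 1 := by
    have := Real.log_lt_sub_one_of_pos (by norm_num : (0:ℝ) < 2) (by norm_num)
    linarith
  nlinarith [hLpos, he1, hlog2, Real.log_pos (by norm_num : (1:ℝ) < 2)]
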